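/- arXiv:1901.07224 — 2 statements merged into one kernel-verified Lean document; each statement's English description precedes it below -/
import Mathlib

section
/- For every a ∈ ℝ and every −π/2 < s < r < π/2 there exists b > a such that (e^b + e^a)(tan r − tan s) = (e^b − e^a)(sec r + sec s). In particular there exist a < b and −π/2 < s < r < π/2 for which the total weighted length of the two grim-reaper arcs equals that of the two vertical sides, realizing the structural condition α_f(Ω) = β_f(Ω) of case (b) of the Jenkins-Serrin existence theorem on the grim-reaper quadrilateral. -/
open Real Set

lemma grim_main (a s r : ℝ) (hs : -(π/2) < s) (hsr : s < r) (hr : r < π/2) :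
    ∃ b, a < b ∧
      (Real.exp b + Real.exp a) * (Real.tan r - Real.tan s)
        = (Real.exp b - Real.exp a) * (1 / Real.cos r + 1 / Real.cos s) := by
  have hr' : -(π/2) < r := lt_trans hs hsr
  have hs' : s < π/2 := lt_trans hsr hr
  have hcr : 0 < Real.cos r := Real.cos_pos_of_mem_Ioo ⟨hr', hr⟩
  have hcs : 0 < Real.cos s := Real.cos_pos_of_mem_Ioo ⟨hs, hs'⟩
  set T := Real.tan r - Real.tan s with hTdef
  set S := 1 / Real.cos r + 1 / Real.cos s with hSdef
  have htan : Real.tan s < Real.tan r :=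
    Real.tan_lt_tan_of_lt_of_lt_pi_div_two hs hr hsr
  have hT : 0 < T := sub_pos.mpr htan
  have hsinr : Real.sin r < 1 := by
    have := Real.sin_lt_sin_of_lt_of_le_pi_div_two hr'.le le_rfl hr
    simpa using this
  have hsins : -1 < Real.sin s := by
    have := Real.sin_lt_sin_of_lt_of_le_pi_div_two (le_refl (-(π/2))) hs'.le hs
    simpa using this
  have hST : 0 < S - T := by
    have h1 : 0 < (1 - Real.sin r) / Real.cos r := div_pos (by linarith) hcr
    have h2 : 0 < (1 + Real.sin s) / Real.cos s := by
      apply div_pos (by linarith) hcs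
    have hrw : S - T = (1 - Real.sin r) / Real.cos r + (1 + Real.sin s) / Real.cos s := by
      rw [hSdef, hTdef, Real.tan_eq_sin_div_cos, Real.tan_eq_sin_div_cos]
      field_simp
      ring
    rw [hrw]; linarith
  have hratio : 1 < (S + T) / (S - T) := by
    rw [lt_div_iff₀ hST]; linarith
  refine ⟨a + Real.log ((S + T) / (S - T)), ?_, ?_⟩
  · have : 0 < Real.log ((S + T) / (S - T)) := Real.log_pos hratio
    linarith
  · have hexp : Real.exp (a + Real.log ((S + T) / (S - T)))
        = Real.exp a * ((S + T) / (S - T)) := by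
      rw [Real.exp_add, Real.exp_log (by linarith)]
    rw [hexp]
    have hne : S - T ≠ 0 := ne_of_gt hST
    field_simp
    ring

/-- For every `a` and every `-π/2 < s < r < π/2` there exists `b > a` realizing the
equality of weighted lengths of the grim-reaper arcs and the vertical sides; in
particular there exist parameters realizing the structural condition
`α_f(Ω) = β_f(Ω)` of case (b) of the Jenkins-Serrin existence theorem. -/
theorem exists_length_balance :
    (∀ a s r : ℝ, -(π/2) < s → s < r → r < π/2 →
      ∃ b, a < b ∧
        (Real.exp b + Real.exp a) * (Real.tan r - Real.tan s)
          = (Real.exp b - Real.exp a) * (1 / Real.cos r + 1 / Real.cos s)) ∧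
    (∃ a b s r : ℝ, a < b ∧ -(π/2) < s ∧ s < r ∧ r < π/2 ∧
      (Real.exp b + Real.exp a) * (Real.tan r - Real.tan s)
        = (Real.exp b - Real.exp a) * (1 / Real.cos r + 1 / Real.cos s)) := by
  have hpi : 0 < π := Real.pi_pos
  have h0 : -(π/2) < 0 := by linarith
  have h1 : (0:ℝ) < π/4 := by linarith
  have h2 : π/4 < π/2 := by linarith
  refine ⟨fun a s r hs hsr hr => grim_main a s r hs hsr hr, ?_⟩
  obtain ⟨b, hab, heq⟩ := grim_main 0 0 (π/4) h0 h1 h2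
  exact ⟨0, b, 0, π/4, hab, h0, h1, h2, heq⟩
end

section
/- Let n ≥ 1 and v₁, v₂ ∈ ℝⁿ. Set Wᵢ = √(1 + |vᵢ|²) and Nᵢ = (1/Wᵢ, −vᵢ/Wᵢ) ∈ ℝ × ℝⁿ (so |Nᵢ| = 1). Then ⟨v₁ − v₂, v₁/W₁ − v₂/W₂⟩ = ½ (W₁ + W₂) |N₁ − N₂|². In particular ⟨v₁ − v₂, v₁/W₁ − v₂/W₂⟩ ≥ 0, with equality if and only if v₁ = v₂. -/
set_option maxHeartbeats 1000000


open Real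

/-- The algebraic identity behind the maximum principle for the graphical translator
equation: with `Wᵢ = √(1 + |vᵢ|²)` and `Nᵢ = (1/Wᵢ, -vᵢ/Wᵢ)` the downward unit normals,
`⟨v₁ - v₂, v₁/W₁ - v₂/W₂⟩ = ½ (W₁ + W₂) |N₁ - N₂|²`; in particular the left hand side is
nonnegative and vanishes iff `v₁ = v₂`. -/
theorem translator_monotonicity_identity (n : ℕ) (hn : 1 ≤ n)
    (v₁ v₂ : EuclideanSpace ℝ (Fin n)) :
    let W₁ : ℝ := Real.sqrt (1 + ‖v₁‖ ^ 2)
    let W₂ : ℝ := Real.sqrt (1 + ‖v₂‖ ^ 2)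
    let N₁ : WithLp 2 (ℝ × EuclideanSpace ℝ (Fin n)) :=
      (WithLp.equiv 2 (ℝ × EuclideanSpace ℝ (Fin n))).symm (1 / W₁, -(W₁⁻¹ • v₁))
    let N₂ : WithLp 2 (ℝ × EuclideanSpace ℝ (Fin n)) :=
      (WithLp.equiv 2 (ℝ × EuclideanSpace ℝ (Fin n))).symm (1 / W₂, -(W₂⁻¹ • v₂))
    ‖N₁‖ = 1 ∧ ‖N₂‖ = 1 ∧
    (inner ℝ (v₁ - v₂) (W₁⁻¹ • v₁ - W₂⁻¹ • v₂) : ℝ)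
      = (1/2) * (W₁ + W₂) * ‖N₁ - N₂‖ ^ 2 ∧
    (0 : ℝ) ≤ (inner ℝ (v₁ - v₂) (W₁⁻¹ • v₁ - W₂⁻¹ • v₂) : ℝ) ∧
    ((inner ℝ (v₁ - v₂) (W₁⁻¹ • v₁ - W₂⁻¹ • v₂) : ℝ) = 0 ↔ v₁ = v₂) := by
  intro W₁ W₂ N₁ N₂
  set a := ‖v₁‖ with ha
  set b := ‖v₂‖ with hb
  set p : ℝ := inner ℝ v₁ v₂ with hp
  have hW₁pos : 0 < W₁ := Real.sqrt_pos.mpr (by positivity)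
  have hW₂pos : 0 < W₂ := Real.sqrt_pos.mpr (by positivity)
  have hW₁ : W₁ ^ 2 = 1 + a ^ 2 := Real.sq_sqrt (by positivity)
  have hW₂ : W₂ ^ 2 = 1 + b ^ 2 := Real.sq_sqrt (by positivity)
  -- norms of N₁, N₂
  have hnormsq : ∀ (W : ℝ) (v : EuclideanSpace ℝ (Fin n)),
      ‖((WithLp.equiv 2 (ℝ × EuclideanSpace ℝ (Fin n))).symm (1 / W, -(W⁻¹ • v)))‖ ^ 2
        = (1 / W) ^ 2 + (W⁻¹) ^ 2 * ‖v‖ ^ 2 := by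
    intro W v
    rw [WithLp.prod_norm_sq_eq_of_L2]
    simp [WithLp.equiv_symm_apply, WithLp.toLp_fst, WithLp.toLp_snd, norm_smul, mul_pow,
      Real.norm_eq_abs, sq_abs]
  have hN₁sq : ‖N₁‖ ^ 2 = 1 := by
    rw [hnormsq]
    field_simp
    nlinarith [hW₁]
  have hN₂sq : ‖N₂‖ ^ 2 = 1 := by
    rw [hnormsq]
    field_simp
    nlinarith [hW₂]
  have hN₁ : ‖N₁‖ = 1 := by
    have h := hN₁sq
    have h0 : (0:ℝ) ≤ ‖N₁‖ := norm_nonneg _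
    nlinarith
  have hN₂ : ‖N₂‖ = 1 := by
    have h := hN₂sq
    have h0 : (0:ℝ) ≤ ‖N₂‖ := norm_nonneg _
    nlinarith
  -- ‖N₁ - N₂‖²
  have hdiff : N₁ - N₂ = (WithLp.equiv 2 (ℝ × EuclideanSpace ℝ (Fin n))).symm
      (1 / W₁ - 1 / W₂, -(W₁⁻¹ • v₁) - -(W₂⁻¹ • v₂)) := by
    rfl
  have hN₁def : N₁ = (WithLp.equiv 2 (ℝ × EuclideanSpace ℝ (Fin n))).symm
      (1 / W₁, -(W₁⁻¹ • v₁)) := rfl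
  have hN₂def : N₂ = (WithLp.equiv 2 (ℝ × EuclideanSpace ℝ (Fin n))).symm
      (1 / W₂, -(W₂⁻¹ • v₂)) := rfl
  clear_value W₁ W₂ N₁ N₂ a b p
  have hsubsq : ‖W₁⁻¹ • v₁ - W₂⁻¹ • v₂‖ ^ 2
      = (W₁⁻¹) ^ 2 * a ^ 2 - 2 * (W₁⁻¹ * W₂⁻¹) * p + (W₂⁻¹) ^ 2 * b ^ 2 := by
    rw [norm_sub_sq_real, norm_smul, norm_smul, real_inner_smul_left, real_inner_smul_right]
    simp [Real.norm_eq_abs, abs_of_pos (inv_pos.mpr hW₁pos), abs_of_pos (inv_pos.mpr hW₂pos),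
      mul_pow, ← hp]
    rw [ha, hb]
    ring
  have hNdiffsq : ‖N₁ - N₂‖ ^ 2
      = (1 / W₁ - 1 / W₂) ^ 2 + ((W₁⁻¹) ^ 2 * a ^ 2 - 2 * (W₁⁻¹ * W₂⁻¹) * p
          + (W₂⁻¹) ^ 2 * b ^ 2) := by
    rw [hdiff, WithLp.prod_norm_sq_eq_of_L2]
    simp only [WithLp.equiv_symm_apply, WithLp.toLp_fst, WithLp.toLp_snd]
    rw [show -(W₁⁻¹ • v₁) - -(W₂⁻¹ • v₂) = -(W₁⁻¹ • v₁ - W₂⁻¹ • v₂) by abel, norm_neg, hsubsq]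
    simp [Real.norm_eq_abs, sq_abs]
  -- inner product expansion
  have hinner : (inner ℝ (v₁ - v₂) (W₁⁻¹ • v₁ - W₂⁻¹ • v₂) : ℝ)
      = W₁⁻¹ * a ^ 2 - W₂⁻¹ * p - W₁⁻¹ * p + W₂⁻¹ * b ^ 2 := by
    rw [inner_sub_left, inner_sub_right, inner_sub_right, real_inner_smul_right,
      real_inner_smul_right, real_inner_smul_right, real_inner_smul_right,
      real_inner_self_eq_norm_sq, real_inner_self_eq_norm_sq]
    have hq : (inner ℝ v₂ v₁ : ℝ) = p := by rw [hp]; exact real_inner_comm v₁ v₂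
    rw [← ha, ← hb]
    rw [hq, ← hp]
    ring
  have key : (inner ℝ (v₁ - v₂) (W₁⁻¹ • v₁ - W₂⁻¹ • v₂) : ℝ)
      = (1/2) * (W₁ + W₂) * ‖N₁ - N₂‖ ^ 2 := by
    have ha2 : a ^ 2 = W₁ ^ 2 - 1 := by linarith
    have hb2 : b ^ 2 = W₂ ^ 2 - 1 := by linarith
    rw [hinner, hNdiffsq, ha2, hb2]
    field_simp
    ring
  refine ⟨hN₁, hN₂, key, ?_, ?_⟩
  · rw [key]
    positivity
  · constructor
    · intro h0
      have hNsq : ‖N₁ - N₂‖ ^ 2 = 0 := by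
        rw [key] at h0
        have : 0 < W₁ + W₂ := by linarith
        nlinarith [sq_nonneg ‖N₁ - N₂‖]
      have hNeq : N₁ = N₂ := by
        have h0' : ‖N₁ - N₂‖ = 0 := pow_eq_zero_iff two_ne_zero |>.mp hNsq
        exact sub_eq_zero.mp (norm_eq_zero.mp h0')
      have hpair : ((1 / W₁ : ℝ), -(W₁⁻¹ • v₁)) = ((1 / W₂ : ℝ), -(W₂⁻¹ • v₂)) :=
        (WithLp.equiv 2 (ℝ × EuclideanSpace ℝ (Fin n))).symm.injective
          (by rw [← hN₁def, ← hN₂def]; exact hNeq)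
      have h1 : (1 / W₁ : ℝ) = 1 / W₂ := congrArg Prod.fst hpair
      have hW : W₁ = W₂ := by
        field_simp at h1
        linarith
      have h2 : W₁⁻¹ • v₁ = W₂⁻¹ • v₂ := by
        have := congrArg Prod.snd hpair
        simpa using this
      rw [hW] at h2
      exact smul_right_injective _ (inv_ne_zero hW₂pos.ne') h2
    · intro h
      subst h
      simp
end
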